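/- Let Π be a subgroup of ℝ × ℤ with projections E : Π → ℝ and μ : Π → ℤ. The map sending Σ c_g [g] to Σ c_g e^{μ(g)/2} T^{E(g)} is an injective ring homomorphism from the Novikov ring Λ(Π) (elements supported so that {g : c_g ≠ 0, E(g) ≤ C} is finite for all C) into the universal Novikov ring Λ_nov over ℚ. -/

import Mathlib

open scoped BigOperators

/-- Growth condition defining elements of the universal Novikov ring `Λ_nov` over `ℚ`. -/
def NovCond (f : ℝ × ℤ → ℚ) : Prop :=
  ∀ C : ℝ, {x : ℝ × ℤ | f x ≠ 0 ∧ x.1 ≤ C}.Finite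

/-- Formal multiplication of Novikov series. -/
noncomputable def novMul (f g : ℝ × ℤ → ℚ) : ℝ × ℤ → ℚ :=
  fun x => ∑ᶠ p : (ℝ × ℤ) × (ℝ × ℤ), if p.1 + p.2 = x then f p.1 * g p.2 else 0

/-- The multiplicative unit of `Λ_nov`. -/
noncomputable def novOne : ℝ × ℤ → ℚ :=
  fun x => if x = (0, 0) then 1 else 0

/-- Finiteness condition defining the Novikov ring `Λ(P)` of a subgroup `P ⊆ ℝ × ℤ`. -/
def PiAdmissible (P : AddSubgroup (ℝ × ℤ)) (c : P → ℚ) : Prop :=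
  ∀ C : ℝ, {g : P | c g ≠ 0 ∧ (g : ℝ × ℤ).1 ≤ C}.Finite

/-- The convolution product on `Λ(P)`. -/
noncomputable def piConv (P : AddSubgroup (ℝ × ℤ)) (c c' : P → ℚ) : P → ℚ :=
  fun x => ∑ᶠ p : P × P, if p.1 + p.2 = x then c p.1 * c' p.2 else 0

open Classical in
/-- The map `Σ c_g [g] ↦ Σ c_g e^{μ(g)/2} T^{E(g)}` induced by `[g] ↦ e^{μ(g)/2} T^{E(g)}`,
where `E, μ` are the two projections of `ℝ × ℤ`. -/
noncomputable def piEmbed (P : AddSubgroup (ℝ × ℤ)) (c : P → ℚ) : ℝ × ℤ → ℚ :=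
  fun x => if h : x ∈ P then c ⟨x, h⟩ else 0

/-- The map `Σ c_g [g] ↦ Σ c_g e^{μ(g)/2} T^{E(g)}` is an injective ring homomorphism
from the Novikov ring `Λ(P)` into the universal Novikov ring over `ℚ`:
it is injective, lands in `Λ_nov` (i.e. satisfies the growth condition), sends `1` to `1`,
and respects addition and (convolution) multiplication. -/
theorem piEmbed_injective_ringHom (P : AddSubgroup (ℝ × ℤ)) :
    Function.Injective (piEmbed P) ∧
    (∀ c : P → ℚ, PiAdmissible P c → NovCond (piEmbed P c)) ∧
    piEmbed P (fun g => if g = 0 then 1 else 0) = novOne ∧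
    (∀ c c' : P → ℚ,
      piEmbed P (fun g => c g + c' g) = fun x => piEmbed P c x + piEmbed P c' x) ∧
    (∀ c c' : P → ℚ, PiAdmissible P c → PiAdmissible P c' →
      piEmbed P (piConv P c c') = novMul (piEmbed P c) (piEmbed P c')) := by
  classical
  have embed_coe : ∀ (c : P → ℚ) (g : P), piEmbed P c (g : ℝ × ℤ) = c g := by
    intro c g
    simp [piEmbed]
  have embed_ne : ∀ (c : P → ℚ) (x : ℝ × ℤ), piEmbed P c x ≠ 0 → x ∈ P := by
    intro c x hx
    by_contra h
    exact hx (by simp [piEmbed, h])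
  refine ⟨?_, ?_, ?_, ?_, ?_⟩
  · intro c c' h
    funext g
    have := congrFun h (g : ℝ × ℤ)
    rwa [embed_coe, embed_coe] at this
  · intro c hc C
    have : {x : ℝ × ℤ | piEmbed P c x ≠ 0 ∧ x.1 ≤ C} ⊆
        (fun g : P => (g : ℝ × ℤ)) '' {g : P | c g ≠ 0 ∧ (g : ℝ × ℤ).1 ≤ C} := by
      rintro x ⟨hx, hxC⟩
      have hxP : x ∈ P := embed_ne c x hx
      refine ⟨⟨x, hxP⟩, ⟨?_, hxC⟩, rfl⟩
      have := embed_coe c ⟨x, hxP⟩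
      simp only [this] at hx
      exact hx
    exact ((hc C).image _).subset this
  · funext x
    by_cases h : x ∈ P
    · have h0 : ((⟨x, h⟩ : P) = 0) ↔ x = (0, 0) := by
        rw [Subtype.ext_iff]; rfl
      simp [piEmbed, novOne, h, h0]
    · have : x ≠ (0, 0) := fun hx => h (hx ▸ P.zero_mem)
      have : x ≠ (0 : ℝ × ℤ) := fun hx => h (hx ▸ P.zero_mem)
      simp [piEmbed, novOne, h, this]
      exact fun hx => h (hx ▸ P.zero_mem)
  · intro c c'
    funext x
    by_cases h : x ∈ P <;> simp [piEmbed, h]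
  · intro c c' _ _
    funext x
    by_cases h : x ∈ P
    · rw [show piEmbed P (piConv P c c') x = piConv P c c' ⟨x, h⟩ from by simp [piEmbed, h]]
      have key : novMul (piEmbed P c) (piEmbed P c') x =
          ∑ᶠ q : P × P, (if ((q.1 : ℝ × ℤ), (q.2 : ℝ × ℤ)).1 +
            ((q.1 : ℝ × ℤ), (q.2 : ℝ × ℤ)).2 = x then
            piEmbed P c ((q.1 : ℝ × ℤ)) * piEmbed P c' ((q.2 : ℝ × ℤ)) else 0) := by
        set F : (ℝ × ℤ) × (ℝ × ℤ) → ℚ :=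
          fun p => if p.1 + p.2 = x then piEmbed P c p.1 * piEmbed P c' p.2 else 0 with hF
        have hinj : Function.Injective
            (fun q : P × P => ((q.1 : ℝ × ℤ), (q.2 : ℝ × ℤ))) := by
          intro a b hab
          simp only [Prod.mk.injEq] at hab
          exact Prod.ext (Subtype.ext hab.1) (Subtype.ext hab.2)
        have hsupp : Function.support F ⊆
            Set.range (fun q : P × P => ((q.1 : ℝ × ℤ), (q.2 : ℝ × ℤ))) := by
          intro p hp
          simp only [hF, Function.mem_support] at hp
          by_cases heq : p.1 + p.2 = x
          · rw [if_pos heq] at hp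
            have h1 : p.1 ∈ P := embed_ne c p.1 (left_ne_zero_of_mul hp)
            have h2 : p.2 ∈ P := embed_ne c' p.2 (right_ne_zero_of_mul hp)
            exact ⟨(⟨p.1, h1⟩, ⟨p.2, h2⟩), rfl⟩
          · exact absurd (if_neg heq) hp
        calc ∑ᶠ p, F p = ∑ᶠ p ∈ Set.univ, F p := (finsum_mem_univ F).symm
          _ = ∑ᶠ p ∈ Set.range (fun q : P × P => ((q.1 : ℝ × ℤ), (q.2 : ℝ × ℤ))), F p := by
              apply finsum_mem_inter_support_eq
              rw [Set.univ_inter, Set.inter_eq_right.mpr hsupp]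
          _ = _ := finsum_mem_range hinj
      rw [key, piConv]
      congr 1
      funext q
      have hiff : ((q.1 : ℝ × ℤ) + (q.2 : ℝ × ℤ) = x) ↔ q.1 + q.2 = (⟨x, h⟩ : P) := by
        rw [Subtype.ext_iff]; rfl
      by_cases hq : q.1 + q.2 = (⟨x, h⟩ : P)
      · rw [if_pos hq, if_pos (hiff.mpr hq), embed_coe, embed_coe]
      · rw [if_neg hq, if_neg (fun hh => hq (hiff.mp hh))]
    · rw [show piEmbed P (piConv P c c') x = 0 from by simp [piEmbed, h]]
      symm
      apply finsum_eq_zero_of_forall_eq_zero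
      intro p
      by_cases heq : p.1 + p.2 = x
      · rw [if_pos heq]
        by_contra hp
        have h1 : p.1 ∈ P := embed_ne c p.1 (left_ne_zero_of_mul hp)
        have h2 : p.2 ∈ P := embed_ne c' p.2 (right_ne_zero_of_mul hp)
        exact hp (absurd (heq ▸ P.add_mem h1 h2) h)
      · exact if_neg heq
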